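/- Let f: ℝ^d → ℝ be twice continuously differentiable and convex, and let L > 0. If g: ℝ^d → ℝ is a differentiable function whose gradient satisfies ∇g(θ) = Clip_L(∇f(θ)) for all θ ∈ ℝ^d, then g is convex. -/

import Mathlib

open MeasureTheory

/-- `Clip_L v = v / max(1, ‖v‖/L)`: the orthogonal projection of `v` onto
the closed ball of radius `L` centered at the origin. -/
noncomputable def clip {E : Type*} [NormedAddCommGroup E] [NormedSpace ℝ E]
    (L : ℝ) (v : E) : E :=
  (max 1 (‖v‖ / L))⁻¹ • v

section Auxiliary

open InnerProductSpace Set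

local notation "⟪" x ", " y "⟫" => @inner ℝ _ _ x y

lemma clip_of_norm_le {E : Type*} [NormedAddCommGroup E] [InnerProductSpace ℝ E]
    {L : ℝ} (hL : 0 < L) {v : E} (h : ‖v‖ ≤ L) : clip L v = v := by
  unfold clip
  rw [max_eq_left ((div_le_one hL).2 h), inv_one, one_smul]

lemma clip_of_lt {E : Type*} [NormedAddCommGroup E] [InnerProductSpace ℝ E]
    {L : ℝ} (hL : 0 < L) {v : E} (h : L < ‖v‖) :
    clip L v = (L * ‖v‖⁻¹) • v := by
  unfold clip
  rw [max_eq_right ((one_le_div hL).2 h.le)]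
  congr 1
  field_simp

lemma hasDerivAt_line {E : Type*} [NormedAddCommGroup E] [InnerProductSpace ℝ E]
    [CompleteSpace E] {g : E → ℝ} {x u : E} {t : ℝ}
    (hg : DifferentiableAt ℝ g (x + t • u)) :
    HasDerivAt (fun s : ℝ => g (x + s • u)) ⟪gradient g (x + t • u), u⟫ t := by
  have hγ : HasDerivAt (fun s : ℝ => x + s • u) u t := by
    simpa using ((hasDerivAt_id t).smul_const u).const_add x
  have h := hg.hasGradientAt.hasFDerivAt.comp_hasDerivAt t hγ
  simpa [InnerProductSpace.toDual_apply_apply, Function.comp_def] using h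

lemma monotone_inner_gradient {E : Type*} [NormedAddCommGroup E] [InnerProductSpace ℝ E]
    [CompleteSpace E] {f : E → ℝ} (hfd : Differentiable ℝ f)
    (hconv : ConvexOn ℝ Set.univ f) (x u : E) :
    Monotone fun t : ℝ => ⟪gradient f (x + t • u), u⟫ := by
  have hq : ConvexOn ℝ Set.univ fun t : ℝ => f (x + t • u) := by
    have := hconv.comp_affineMap (AffineMap.lineMap x (x + u))
    have e : (fun t : ℝ => f (x + t • u)) = f ∘ AffineMap.lineMap x (x + u) := by
      funext t
      simp [AffineMap.lineMap_apply, add_comm]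
    rw [e]
    exact this.subset (Set.subset_univ _) (convex_univ)
  have hd : ∀ t : ℝ, HasDerivAt (fun s : ℝ => f (x + s • u))
      ⟪gradient f (x + t • u), u⟫ t := fun t => hasDerivAt_line (hfd _)
  have hmono := hq.monotoneOn_deriv (fun t _ => (hd t).differentiableAt)
  intro a b hab
  have h1 := hmono (Set.mem_univ a) (Set.mem_univ b) hab
  rwa [(hd a).deriv, (hd b).deriv] at h1

lemma nonneg_of_monotone_hasDerivAt {m : ℝ → ℝ} (hm : Monotone m) {c t : ℝ}
    (h : HasDerivAt m c t) : 0 ≤ c := by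
  have ht := hasDerivAt_iff_tendsto_slope.mp h
  refine ge_of_tendsto ht ?_
  filter_upwards [self_mem_nhdsWithin] with y (hy : y ≠ t)
  rcases lt_or_gt_of_ne hy with h' | h'
  · rw [slope_def_field]
    exact div_nonneg_of_nonpos (sub_nonpos.2 (hm h'.le)) (sub_nonpos.2 h'.le)
  · rw [slope_def_field]
    exact div_nonneg (sub_nonneg.2 (hm h'.le)) (sub_nonneg.2 h'.le)

lemma gradient_fderiv_symm {d : ℕ} {f : EuclideanSpace ℝ (Fin d) → ℝ} (hf : ContDiff ℝ 2 f)
    (θ w z : EuclideanSpace ℝ (Fin d)) :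
    ⟪fderiv ℝ (gradient f) θ w, z⟫ = ⟪fderiv ℝ (gradient f) θ z, w⟫ := by
  have hsymm : IsSymmSndFDerivAt ℝ f θ := hf.contDiffAt.isSymmSndFDerivAt (by norm_num)
  have hf'd : HasFDerivAt (fderiv ℝ f) (fderiv ℝ (fderiv ℝ f) θ) θ :=
    (((hf.fderiv_right (m := 1) (by norm_num)).differentiable one_ne_zero) θ).hasFDerivAt
  have hVd : HasFDerivAt (gradient f) (fderiv ℝ (gradient f) θ) θ := by
    apply DifferentiableAt.hasFDerivAt
    have hgr : gradient f = fun y => (toDual ℝ _).symm (fderiv ℝ f y) := rfl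
    rw [hgr]
    exact (toDual ℝ (EuclideanSpace ℝ (Fin d))).symm.differentiable.differentiableAt.comp θ
      hf'd.differentiableAt
  have happ : ∀ y v : EuclideanSpace ℝ (Fin d),
      ⟪fderiv ℝ (gradient f) θ v, y⟫ = fderiv ℝ (fderiv ℝ f) θ v y := by
    intro y
    have h1 := hVd.inner ℝ (hasFDerivAt_const y θ)
    have h2 : HasFDerivAt (fun x => fderiv ℝ f x y)
        ((ContinuousLinearMap.apply ℝ ℝ y).comp (fderiv ℝ (fderiv ℝ f) θ)) θ :=
      ((ContinuousLinearMap.apply ℝ ℝ y).hasFDerivAt).comp θ hf'd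
    have heq : (fun x => ⟪gradient f x, y⟫) = fun x => fderiv ℝ f x y := by
      funext x
      exact toDual_symm_apply
    rw [heq] at h1
    have h3 := h1.unique h2
    intro v
    have happ2 := congrFun (congrArg (fun (T : _ →L[ℝ] ℝ) => (T : _ → ℝ)) h3) v
    simpa using happ2
  rw [happ z w, happ w z, hsymm w z]

end Auxiliary

section Main

open InnerProductSpace Set

local notation "⟪" x ", " y "⟫" => @inner ℝ _ _ x y

set_option maxHeartbeats 1000000 in
/-- **Gradient clipping retains convexity.** If `f : ℝ^d → ℝ` is twice continuously
differentiable and convex, `L > 0`, and `g` is a differentiable function whose gradient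
satisfies `∇g(θ) = Clip_L(∇f(θ))` for all `θ`, then `g` is convex. -/
theorem convexOn_of_gradient_eq_clip {d : ℕ} {L : ℝ} (hL : 0 < L)
    (f g : EuclideanSpace ℝ (Fin d) → ℝ)
    (hf : ContDiff ℝ 2 f) (hfconv : ConvexOn ℝ Set.univ f)
    (hg : Differentiable ℝ g)
    (hgrad : ∀ θ, gradient g θ = clip L (gradient f θ)) :
    ConvexOn ℝ Set.univ g := by
  classical
  have hfd : Differentiable ℝ f := hf.differentiable two_ne_zero
  set V : EuclideanSpace ℝ (Fin d) → EuclideanSpace ℝ (Fin d) := gradient f with hVdef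
  have hV1 : ContDiff ℝ 1 V := by
    have h1 : ContDiff ℝ 1 (fderiv ℝ f) := hf.fderiv_right (by norm_num)
    have h0 : V = fun θ => (toDual ℝ (EuclideanSpace ℝ (Fin d))).symm (fderiv ℝ f θ) := rfl
    rw [h0]
    exact (toDual ℝ (EuclideanSpace ℝ (Fin d))).symm.contDiff.comp h1
  set H : EuclideanSpace ℝ (Fin d) → (EuclideanSpace ℝ (Fin d) →L[ℝ] EuclideanSpace ℝ (Fin d)) :=
    fun θ => fderiv ℝ V θ with hHdef
  have hVd : ∀ θ, HasFDerivAt V (H θ) θ :=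
    fun θ => (hV1.differentiable one_ne_zero θ).hasFDerivAt
  have hVlineDeriv : ∀ (x u : EuclideanSpace ℝ (Fin d)) (t : ℝ),
      HasDerivAt (fun s : ℝ => V (x + s • u)) (H (x + t • u) u) t := by
    intro x u t
    have hγ : HasDerivAt (fun s : ℝ => x + s • u) u t := by
      simpa using ((hasDerivAt_id t).smul_const u).const_add x
    exact (hVd (x + t • u)).comp_hasDerivAt t hγ
  have hMono : ∀ x u : EuclideanSpace ℝ (Fin d),
      Monotone fun t : ℝ => ⟪V (x + t • u), u⟫ := fun x u =>
    monotone_inner_gradient hfd hfconv x u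
  have hHsym : ∀ θ w z, ⟪H θ w, z⟫ = ⟪H θ z, w⟫ := fun θ w z =>
    gradient_fderiv_symm hf θ w z
  have hHpsd : ∀ θ w, 0 ≤ ⟪H θ w, w⟫ := by
    intro θ w
    have hd : HasDerivAt (fun t : ℝ => ⟪V (θ + t • w), w⟫) ⟪H θ w, w⟫ 0 := by
      have := (hVlineDeriv θ w 0).inner ℝ (hasDerivAt_const (0:ℝ) w)
      simpa using this
    exact nonneg_of_monotone_hasDerivAt (hMono θ w) hd
  have hnorm : ∀ y, Real.sqrt ⟪V y, V y⟫ = ‖V y‖ := fun y => by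
    rw [real_inner_self_eq_norm_mul_norm, Real.sqrt_mul_self (norm_nonneg _)]
  clear_value V H
  -- the key identity: where the gradient is long, it is an eigenvector of the Hessian
  have hKey : ∀ θ0, L < ‖V θ0‖ → ∀ w,
      ⟪V θ0, H θ0 w⟫ * ⟪V θ0, V θ0⟫ = ⟪V θ0, H θ0 (V θ0)⟫ * ⟪V θ0, w⟫ := by
    intro θ0 hθ0 w
    have hs : (0:ℝ) < ‖V θ0‖ := lt_trans hL hθ0
    have hp0 : ⟪V θ0, V θ0⟫ ≠ 0 := by
      rw [real_inner_self_eq_norm_mul_norm]; positivity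
    have hq : HasFDerivAt (fun y => ⟪V y, V y⟫)
        ((fderivInnerCLM ℝ (V θ0, V θ0)).comp ((H θ0).prod (H θ0))) θ0 :=
      (hVd θ0).inner ℝ (hVd θ0)
    have hsq := hq.sqrt hp0
    have hsqne : Real.sqrt ⟪V θ0, V θ0⟫ ≠ 0 := by rw [hnorm]; positivity
    have hinv := (hasDerivAt_inv hsqne).comp_hasFDerivAt θ0 hsq
    have hcm := hinv.const_mul L
    have hG := hcm.smul (hVd θ0)
    set B := (L * ((fun y => y⁻¹) ∘ fun y => Real.sqrt ⟪V y, V y⟫) θ0) • H θ0 +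
        (L • -(Real.sqrt ⟪V θ0, V θ0⟫ ^ 2)⁻¹ • (1 / (2 * Real.sqrt ⟪V θ0, V θ0⟫)) •
          (fderivInnerCLM ℝ (V θ0, V θ0)).comp ((H θ0).prod (H θ0))).smulRight (V θ0) with hB
    have hGB : HasFDerivAt (fun y => (L * (Real.sqrt ⟪V y, V y⟫)⁻¹) • V y) B θ0 := hG
    have hWopen : IsOpen {y : EuclideanSpace ℝ (Fin d) | L < ‖V y‖} :=
      isOpen_lt continuous_const (continuous_norm.comp hV1.continuous)
    have hEv : ∀ᶠ y in nhds θ0,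
        HasFDerivAt g (innerSL ℝ ((fun y => (L * (Real.sqrt ⟪V y, V y⟫)⁻¹) • V y) y)) y := by
      filter_upwards [hWopen.mem_nhds hθ0] with y (hy : L < ‖V y‖)
      have h1 : HasFDerivAt g (toDual ℝ (EuclideanSpace ℝ (Fin d)) (gradient g y)) y :=
        (hg y).hasGradientAt.hasFDerivAt
      have h2 : toDual ℝ (EuclideanSpace ℝ (Fin d)) (gradient g y)
          = innerSL ℝ ((L * (Real.sqrt ⟪V y, V y⟫)⁻¹) • V y) := by
        ext z
        rw [toDual_apply_apply, hgrad y, clip_of_lt hL hy, hnorm]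
        rfl
      rwa [h2] at h1
    have hf''g : HasFDerivAt
        (fun y => innerSL ℝ ((fun y => (L * (Real.sqrt ⟪V y, V y⟫)⁻¹) • V y) y))
        ((innerSL ℝ (E := EuclideanSpace ℝ (Fin d))).comp B) θ0 :=
      (innerSL ℝ (E := EuclideanSpace ℝ (Fin d))).hasFDerivAt.comp θ0 hGB
    have hsym2 := second_derivative_symmetric_of_eventually hEv hf''g
    have hBsym : ∀ v z : EuclideanSpace ℝ (Fin d), ⟪B v, z⟫ = ⟪B z, v⟫ := by
      intro v z
      have h := hsym2 v z
      simpa using h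
    have hBapp : ∀ v z : EuclideanSpace ℝ (Fin d),
        ⟪B v, z⟫ = (L * (Real.sqrt ⟪V θ0, V θ0⟫)⁻¹) * ⟪H θ0 v, z⟫ +
          (L * (-(Real.sqrt ⟪V θ0, V θ0⟫ ^ 2)⁻¹ * ((1 / (2 * Real.sqrt ⟪V θ0, V θ0⟫)) *
            (⟪V θ0, H θ0 v⟫ + ⟪H θ0 v, V θ0⟫)))) * ⟪V θ0, z⟫ := by
      intro v z
      rw [hB]
      simp only [ContinuousLinearMap.add_apply, ContinuousLinearMap.smul_apply,
        ContinuousLinearMap.smulRight_apply, ContinuousLinearMap.coe_comp', Function.comp_apply,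
        ContinuousLinearMap.prod_apply, fderivInnerCLM_apply, inner_add_left,
        real_inner_smul_left, smul_eq_mul]
      try ring
    have hkey0 := hBsym w (V θ0)
    rw [hBapp, hBapp] at hkey0
    have hcw : ⟪H θ0 w, V θ0⟫ = ⟪V θ0, H θ0 w⟫ := real_inner_comm _ _
    have hcV : ⟪H θ0 (V θ0), V θ0⟫ = ⟪V θ0, H θ0 (V θ0)⟫ := real_inner_comm _ _
    have hHVw : ⟪H θ0 (V θ0), w⟫ = ⟪V θ0, H θ0 w⟫ :=
      (hHsym θ0 (V θ0) w).trans (real_inner_comm _ _)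
    rw [hcw, hcV, hHVw] at hkey0
    have hX := add_left_cancel hkey0
    have hSpos : (0:ℝ) < ⟪V θ0, V θ0⟫ := by
      rw [real_inner_self_eq_norm_mul_norm]; positivity
    have hS : Real.sqrt ⟪V θ0, V θ0⟫ ^ 2 = ⟪V θ0, V θ0⟫ := Real.sq_sqrt hSpos.le
    rw [hS] at hX
    have hLne : L ≠ 0 := hL.ne'
    have hSne : ⟪V θ0, V θ0⟫ ≠ 0 := hSpos.ne'
    have hc0ne : (2 * (L * (-(⟪V θ0, V θ0⟫)⁻¹ * (1/(2*Real.sqrt ⟪V θ0, V θ0⟫))))) ≠ 0 := by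
      have he : (2 * (L * (-(⟪V θ0, V θ0⟫)⁻¹ * (1/(2*Real.sqrt ⟪V θ0, V θ0⟫)))))
          = -(L * ((⟪V θ0, V θ0⟫)⁻¹ * (Real.sqrt ⟪V θ0, V θ0⟫)⁻¹)) := by
        rw [one_div, mul_inv]
        ring
      rw [he]
      exact neg_ne_zero.2 (mul_ne_zero hLne (mul_ne_zero (inv_ne_zero hSne) (inv_ne_zero hsqne)))
    have h2 : (2 * (L * (-(⟪V θ0, V θ0⟫)⁻¹ * (1/(2*Real.sqrt ⟪V θ0, V θ0⟫)))))
          * (⟪V θ0, H θ0 w⟫ * ⟪V θ0, V θ0⟫)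
        = (2 * (L * (-(⟪V θ0, V θ0⟫)⁻¹ * (1/(2*Real.sqrt ⟪V θ0, V θ0⟫)))))
          * (⟪V θ0, H θ0 (V θ0)⟫ * ⟪V θ0, w⟫) := by
      linear_combination hX
    exact mul_left_cancel₀ hc0ne h2
  -- pointwise inequality derived from the key identity
  have hCore : ∀ θ, L < ‖V θ‖ → ∀ u,
      ⟪V θ, H θ u⟫ * ⟪V θ, u⟫ ≤ ⟪H θ u, u⟫ * ⟪V θ, V θ⟫ := by
    intro θ hθ u
    have hSpos : (0:ℝ) < ⟪V θ, V θ⟫ := by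
      have : (0:ℝ) < ‖V θ‖ := lt_trans hL hθ
      rw [real_inner_self_eq_norm_mul_norm]; positivity
    have hw := hHpsd θ (⟪V θ, V θ⟫ • u - ⟪V θ, u⟫ • V θ)
    have hexp : ⟪H θ (⟪V θ, V θ⟫ • u - ⟪V θ, u⟫ • V θ), ⟪V θ, V θ⟫ • u - ⟪V θ, u⟫ • V θ⟫ =
        ⟪V θ, V θ⟫^2 * ⟪H θ u, u⟫ - ⟪V θ, V θ⟫ * ⟪V θ, u⟫ * ⟪H θ (V θ), u⟫
          - ⟪V θ, V θ⟫ * ⟪V θ, u⟫ * ⟪H θ u, V θ⟫ + ⟪V θ, u⟫^2 * ⟪H θ (V θ), V θ⟫ := by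
      rw [map_sub, _root_.map_smul, _root_.map_smul]
      simp only [inner_sub_left, inner_sub_right, real_inner_smul_left, real_inner_smul_right]
      ring
    rw [hexp] at hw
    have h1 : ⟪H θ (V θ), u⟫ = ⟪V θ, H θ u⟫ := (hHsym θ (V θ) u).trans (real_inner_comm _ _)
    have h2 : ⟪H θ u, V θ⟫ = ⟪V θ, H θ u⟫ := real_inner_comm _ _
    have h3 : ⟪H θ (V θ), V θ⟫ = ⟪V θ, H θ (V θ)⟫ := real_inner_comm _ _
    rw [h1, h2, h3] at hw
    have h6 : ⟪V θ, u⟫^2 * ⟪V θ, H θ (V θ)⟫ = ⟪V θ, u⟫ * (⟪V θ, H θ u⟫ * ⟪V θ, V θ⟫) := by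
      rw [hKey θ hθ u]
      ring
    rw [h6] at hw
    nlinarith [hw, hSpos]
  -- convexity along every line
  have hline : ∀ x u : EuclideanSpace ℝ (Fin d),
      ConvexOn ℝ Set.univ (fun t : ℝ => g (x + t • u)) := by
    intro x u
    set γ : ℝ → EuclideanSpace ℝ (Fin d) := fun s => x + s • u with hγdef
    set ψ : ℝ → ℝ := fun t => ⟪gradient g (γ t), u⟫ with hψdef
    set m : ℝ → ℝ := fun t => ⟪V (γ t), u⟫ with hmdef
    have hmm : Monotone m := hMono x u
    have hγc : Continuous γ := continuous_const.add (continuous_id.smul continuous_const)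
    have hnc : Continuous fun t => ‖V (γ t)‖ := (hV1.continuous.comp hγc).norm
    have hψm : ∀ t, ‖V (γ t)‖ ≤ L → ψ t = m t := by
      intro t ht
      simp only [hψdef, hgrad, clip_of_norm_le hL ht, hmdef]
    have hψc : Continuous ψ := by
      have h1 : Continuous fun t => clip L (V (γ t)) := by
        unfold clip
        exact (((continuous_const.max ((hnc.div_const L))).inv₀
          (fun v => by positivity)).smul (hV1.continuous.comp hγc))
      have h2 : ψ = fun t => ⟪clip L (V (γ t)), u⟫ := by
        funext t
        simp only [hψdef, hgrad]
      rw [h2]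
      exact h1.inner continuous_const
    have hψderiv : ∀ t, L < ‖V (γ t)‖ → ∃ D, HasDerivAt ψ D t ∧ 0 ≤ D := by
      intro t0 ht0
      have hvpos : (0:ℝ) < ‖V (γ t0)‖ := lt_trans hL ht0
      have hSpos : (0:ℝ) < ⟪V (γ t0), V (γ t0)⟫ := by
        rw [real_inner_self_eq_norm_mul_norm]; positivity
      have hsqpos : (0:ℝ) < Real.sqrt ⟪V (γ t0), V (γ t0)⟫ := by
        rw [hnorm]; positivity
      have hVl : HasDerivAt (fun s => V (γ s)) (H (γ t0) u) t0 := hVlineDeriv x u t0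
      have hnp : HasDerivAt (fun s => ⟪V (γ s), V (γ s)⟫)
          (⟪V (γ t0), H (γ t0) u⟫ + ⟪H (γ t0) u, V (γ t0)⟫) t0 := hVl.inner ℝ hVl
      have hnp0 : ⟪V (γ t0), V (γ t0)⟫ ≠ 0 := hSpos.ne'
      have hsq := hnp.sqrt hnp0
      have hsqne : Real.sqrt ⟪V (γ t0), V (γ t0)⟫ ≠ 0 := hsqpos.ne'
      have hinv := hsq.inv hsqne
      have hm' : HasDerivAt m (⟪V (γ t0), (0:EuclideanSpace ℝ (Fin d))⟫ + ⟪H (γ t0) u, u⟫) t0 :=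
        hVl.inner ℝ (hasDerivAt_const t0 u)
      have hφ := (hinv.const_mul L).mul hm'
      have hOpen : IsOpen {s : ℝ | L < ‖V (γ s)‖} := isOpen_lt continuous_const hnc
      have hEv : ψ =ᶠ[nhds t0] (fun s => L * (Real.sqrt ⟪V (γ s), V (γ s)⟫)⁻¹ * m s) := by
        filter_upwards [hOpen.mem_nhds ht0] with s (hs : L < ‖V (γ s)‖)
        simp only [hψdef, hgrad, clip_of_lt hL hs, real_inner_smul_left, hnorm, hmdef]
        try ring
      have hψd : HasDerivAt ψ
          ((L / (Real.sqrt ⟪V (γ t0), V (γ t0)⟫ * ⟪V (γ t0), V (γ t0)⟫)) *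
            (⟪H (γ t0) u, u⟫ * ⟪V (γ t0), V (γ t0)⟫
              - ⟪V (γ t0), H (γ t0) u⟫ * ⟪V (γ t0), u⟫)) t0 := by
        have h2 := hφ.congr_of_eventuallyEq hEv
        convert h2 using 1
        · rfl
        · rfl
        simp only [hmdef, inner_zero_right, zero_add, Pi.inv_apply]
        rw [real_inner_comm (H (γ t0) u) (V (γ t0)), Real.sq_sqrt hSpos.le]
        set S := ⟪V (γ t0), V (γ t0)⟫ with hSdef
        set e1 := ⟪H (γ t0) u, u⟫ with he1
        set e2 := ⟪V (γ t0), H (γ t0) u⟫ with he2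
        set aa := ⟪V (γ t0), u⟫ with haa
        have hSne : S ≠ 0 := hSpos.ne'
        field_simp
        ring
      refine ⟨_, hψd, ?_⟩
      apply mul_nonneg (div_nonneg hL.le (by positivity))
      have hcore := hCore (γ t0) ht0 u
      linarith
    have hseg : ∀ a b : ℝ, a ≤ b → (∀ r ∈ Ioo a b, L < ‖V (γ r)‖) → ψ a ≤ ψ b := by
      intro a b hab hgt
      have hmono := monotoneOn_of_deriv_nonneg (convex_Icc a b) hψc.continuousOn
        (fun r hr => by
          rw [interior_Icc] at hr
          exact ((hψderiv r (hgt r hr)).choose_spec.1).differentiableAt.differentiableWithinAt)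
        (fun r hr => by
          rw [interior_Icc] at hr
          obtain ⟨D, hD, h0⟩ := hψderiv r (hgt r hr)
          rw [hD.deriv]
          exact h0)
      exact hmono (left_mem_Icc.2 hab) (right_mem_Icc.2 hab) hab
    have hψmono : Monotone ψ := by
      intro t1 t2 h12
      by_cases hC : ∃ r, r ∈ Icc t1 t2 ∩ {r : ℝ | ‖V (γ r)‖ ≤ L}
      · obtain ⟨r0, hr0⟩ := hC
        set C : Set ℝ := Icc t1 t2 ∩ {r : ℝ | ‖V (γ r)‖ ≤ L} with hCdef
        have hCcpt : IsCompact C := isCompact_Icc.inter_right (isClosed_le hnc continuous_const)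
        have hCne : C.Nonempty := ⟨r0, hr0⟩
        set a := sInf C with hadef
        set b := sSup C with hbdef
        have ha : a ∈ C := hCcpt.sInf_mem hCne
        have hb : b ∈ C := hCcpt.sSup_mem hCne
        have hab : a ≤ b := csInf_le_csSup hCne hCcpt.bddBelow hCcpt.bddAbove
        have h1 : ψ t1 ≤ ψ a := by
          apply hseg t1 a ha.1.1
          intro r hr
          by_contra hcon
          push_neg at hcon
          have hrC : r ∈ C := ⟨⟨hr.1.le, hr.2.le.trans ha.1.2⟩, hcon⟩
          exact absurd (csInf_le hCcpt.bddBelow hrC) (not_le.2 hr.2)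
        have h2 : ψ a ≤ ψ b := by
          rw [hψm a ha.2, hψm b hb.2]
          exact hmm hab
        have h3 : ψ b ≤ ψ t2 := by
          apply hseg b t2 hb.1.2
          intro r hr
          by_contra hcon
          push_neg at hcon
          have hrC : r ∈ C := ⟨⟨hb.1.1.trans hr.1.le, hr.2.le⟩, hcon⟩
          exact absurd (le_csSup hCcpt.bddAbove hrC) (not_le.2 hr.1)
        linarith
      · push_neg at hC
        apply hseg t1 t2 h12
        intro r hr
        have hnr := hC r
        simp only [mem_inter_iff, mem_setOf_eq, not_and] at hnr
        exact lt_of_not_ge (hnr ⟨hr.1.le, hr.2.le⟩)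
    have hder : ∀ t, HasDerivAt (fun s => g (x + s • u)) (ψ t) t := fun t =>
      hasDerivAt_line (hg _)
    have hdiff : Differentiable ℝ (fun s => g (x + s • u)) := fun t => (hder t).differentiableAt
    have hderiv_eq : deriv (fun s => g (x + s • u)) = ψ := funext fun t => (hder t).deriv
    exact Monotone.convexOn_univ_of_deriv hdiff (hderiv_eq ▸ hψmono)
  refine ⟨convex_univ, ?_⟩
  intro p _ q _ a b ha hb hab
  have h1 := (hline p (q - p)).2 (Set.mem_univ (0:ℝ)) (Set.mem_univ (1:ℝ)) ha hb hab
  simp only [smul_eq_mul, mul_zero, mul_one, zero_add] at h1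
  have e0 : p + b • (q - p) = a • p + b • q := by
    have : a = 1 - b := by linarith
    subst this
    module
  have e1 : p + (0:ℝ) • (q - p) = p := by module
  have e2 : p + (1:ℝ) • (q - p) = q := by module
  rw [e0, e1, e2] at h1
  simpa using h1

end Main
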